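/- Let n ≥ 1 and let P be the path graph with vertex set {v_0, v_1, …, v_n} and edges v_i v_{i+1} for 0 ≤ i < n. Fix any j ∈ ℤ. Then the number of partial bucket functions (A, f) on P with v_0 ∈ A and f(v_0) = j is at most 4.26 · 4.383^{n−1}. -/

import Mathlib

/-- `fbar : V → ℤ` is a bucket extension of `f` (given on `A`). -/
def IsBucketExtension {V : Type*} (G : SimpleGraph V) (A : Set V) (f fbar : V → ℤ) : Prop :=
  (∀ v ∈ A, fbar v = f v) ∧
  (∀ u v, G.Adj u v → |fbar u - fbar v| ≤ 1) ∧
  (∀ u v, G.Adj u v → u ∈ A → v ∉ A → fbar v ≤ fbar u)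

/-- Partial bucket functions `(A, f)` on the path `v_0 v_1 ⋯ v_n` (encoded by `f` vanishing
outside `A`) with `v_0 ∈ A` and `f(v_0) = j`. -/
def pathPBFs (n : ℕ) (j : ℤ) : Set (Finset (Fin (n + 1)) × (Fin (n + 1) → ℤ)) :=
  {p | (∀ v ∉ p.1, p.2 v = 0) ∧ (0 : Fin (n + 1)) ∈ p.1 ∧ p.2 0 = j ∧
       ∃ fbar, IsBucketExtension (SimpleGraph.pathGraph (n + 1)) ↑p.1 p.2 fbar}

namespace PBFaux

/-- weight of gap state `g`. -/
def gw (g : ℕ) : ℕ := 2 * max 1 g + 1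

/-- `Codes n g`: valid code lists of length `n` starting in gap state `g`. -/
noncomputable def Codes : ℕ → ℕ → Finset (List (Option ℤ))
  | 0, _ => {([] : List (Option ℤ))}
  | n+1, g =>
      ((Codes n (g+1)).image (List.cons (none : Option ℤ))) ∪
      (((Finset.Icc (-((max 1 g : ℕ) : ℤ)) ((max 1 g : ℕ) : ℤ)) ×ˢ (Codes n 0)).image
        (fun p => List.cons (some p.1) p.2))

lemma codes_card_succ (n g : ℕ) :
    (Codes (n+1) g).card ≤ (Codes n (g+1)).card + gw g * (Codes n 0).card := by
  refine (Finset.card_union_le _ _).trans ?_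
  refine add_le_add Finset.card_image_le ?_
  refine Finset.card_image_le.trans ?_
  rw [Finset.card_product, Int.card_Icc]
  have : ((((max 1 g : ℕ) : ℤ) + 1 - -((max 1 g : ℕ) : ℤ)).toNat) = gw g := by
    simp only [gw]; omega
  rw [this]

lemma codes_card_zero (g : ℕ) : (Codes 0 g).card = 1 := rfl

noncomputable def phi : ℕ → ℝ
  | 0 => 4.26 / 4.383
  | g+1 => 4.383 * phi g - (gw g : ℝ) * (4.26 / 4.383)

lemma gw_cast (g : ℕ) (hg : 1 ≤ g) : (gw g : ℝ) = 2*g+1 := by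
  simp only [gw, Nat.max_eq_right hg]; push_cast; ring

lemma phi_ge : ∀ g : ℕ, (2/5 : ℝ) * (2*(g+1)+1) ≤ phi (g+1) := by
  intro g
  induction g with
  | zero =>
    have : phi 1 = 4.383 * (4.26/4.383) - (gw 0 : ℝ) * (4.26/4.383) := by rw [phi]; rw [phi]
    rw [this]
    norm_num [gw]
  | succ g ih =>
    have hg1 : (1:ℝ) ≤ (g:ℝ) + 1 := by nlinarith [Nat.cast_nonneg (α := ℝ) g]
    have hphi : phi (g+2) = 4.383 * phi (g+1) - (gw (g+1) : ℝ) * (4.26/4.383) := by rw [phi]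
    rw [hphi, gw_cast (g+1) (by omega)]
    push_cast at ih ⊢
    nlinarith [ih, hg1]

lemma phi_ge' (g : ℕ) (hg : 1 ≤ g) : (2/5 : ℝ) * (2*g+1) ≤ phi g := by
  obtain ⟨g', rfl⟩ : ∃ g', g = g'+1 := ⟨g-1, by omega⟩
  exact_mod_cast phi_ge g'

lemma codes_card_bound : ∀ n : ℕ, 1 ≤ n → ∀ g : ℕ, ((Codes n g).card : ℝ) ≤ phi g * 4.383 ^ n := by
  intro n
  induction n with
  | zero => omega
  | succ n ih =>
    intro _ g
    rcases Nat.eq_zero_or_pos n with hn | hn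
    · subst hn
      have h0 : (Codes 1 g).card ≤ 1 + gw g := by
        have := codes_card_succ 0 g
        simpa [codes_card_zero] using this
      have h1 : ((Codes 1 g).card : ℝ) ≤ 1 + (gw g : ℝ) := by exact_mod_cast h0
      refine h1.trans ?_
      cases g with
      | zero =>
        have : phi 0 = 4.26/4.383 := by rw [phi]
        rw [this]
        norm_num [gw]
      | succ g =>
        have h2 := phi_ge g
        rw [gw_cast (g+1) (by omega)]
        push_cast at h2 ⊢
        nlinarith [h2]
    · have h1 := ih hn (g+1)
      have h2 := ih hn 0
      have hstep := codes_card_succ n g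
      have hphi : phi (g+1) = 4.383 * phi g - (gw g : ℝ) * phi 0 := by rw [phi]; rw [phi]
      have hc : ((Codes (n+1) g).card : ℝ) ≤ phi (g+1) * 4.383^n + (gw g : ℝ) * (phi 0 * 4.383^n) := by
        calc ((Codes (n+1) g).card : ℝ)
            ≤ ((Codes n (g+1)).card : ℝ) + (gw g : ℝ) * ((Codes n 0).card : ℝ) := by
              exact_mod_cast hstep
          _ ≤ phi (g+1) * 4.383^n + (gw g : ℝ) * (phi 0 * 4.383^n) := by
              refine add_le_add h1 ?_
              exact mul_le_mul_of_nonneg_left h2 (Nat.cast_nonneg _)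
      refine hc.trans ?_
      rw [hphi, pow_succ]
      ring_nf
      nlinarith [pow_pos (by norm_num : (0:ℝ) < 4.383) n]





/-- encoding: position `pos`, current anchor value `v`, remaining length `m`. -/
def enc (a : ℕ → Bool) (F : ℕ → ℤ) : ℕ → ℤ → ℕ → List (Option ℤ)
  | _, _, 0 => []
  | pos, v, m+1 =>
    if a pos then some (F pos - v) :: enc a F (pos+1) (F pos) m
    else none :: enc a F (pos+1) v m

lemma enc_mem (n : ℕ) (a : ℕ → Bool) (F : ℕ → ℤ)
    (hyp : ∀ i anc : ℕ, 1 ≤ i → i ≤ n → a i = true → a anc = true → anc < i →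
      (∀ k, anc < k → k < i → a k = false) →
      |F i - F anc| ≤ ((max 1 (i - anc - 1) : ℕ) : ℤ)) :
    ∀ m pos anc : ℕ, pos + m ≤ n + 1 → anc < pos → a anc = true →
      (∀ k, anc < k → k < pos → a k = false) →
      enc a F pos (F anc) m ∈ Codes m (pos - 1 - anc) := by
  intro m
  induction m with
  | zero =>
    intro pos anc _ _ _ _
    simp [enc, Codes]
  | succ m ih =>
    intro pos anc hle hlt ha hbet
    by_cases hpos : a pos = true
    · have hmem : enc a F (pos+1) (F pos) m ∈ Codes m 0 := by
        have := ih (pos+1) pos (by omega) (by omega) hpos (by intro k h1 h2; omega)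
        simpa using this
      have habs : |F pos - F anc| ≤ ((max 1 (pos - anc - 1) : ℕ) : ℤ) :=
        hyp pos anc (by omega) (by omega) hpos ha hlt hbet
      rw [show pos - 1 - anc = pos - anc - 1 by omega]
      simp only [enc, hpos, if_true]
      rw [Codes]
      refine Finset.mem_union_right _ ?_
      refine Finset.mem_image.2 ⟨⟨F pos - F anc, enc a F (pos+1) (F pos) m⟩, ?_, rfl⟩
      refine Finset.mem_product.2 ⟨?_, hmem⟩
      rw [Finset.mem_Icc]
      dsimp only
      constructor
      · linarith [neg_abs_le (F pos - F anc), habs]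
      · linarith [le_abs_self (F pos - F anc), habs]
    · have hpos' : a pos = false := by simpa using hpos
      have hmem : enc a F (pos+1) (F anc) m ∈ Codes m ((pos - 1 - anc) + 1) := by
        have := ih (pos+1) anc (by omega) (by omega) ha
          (by intro k h1 h2; rcases Nat.lt_or_ge k pos with h | h
              · exact hbet k h1 h
              · have : k = pos := by omega
                subst this; exact hpos')
        rwa [show pos + 1 - 1 - anc = (pos - 1 - anc) + 1 by omega] at this
      simp only [enc, hpos', if_false, Bool.false_eq_true]
      rw [Codes]
      exact Finset.mem_union_left _ (Finset.mem_image.2 ⟨_, hmem, rfl⟩)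

lemma enc_inj (a a' : ℕ → Bool) (F F' : ℕ → ℤ) :
    ∀ m pos v, enc a F pos v m = enc a' F' pos v m →
      ∀ k, pos ≤ k → k < pos + m → (a k = a' k ∧ (a k = true → F k = F' k)) := by
  intro m
  induction m with
  | zero => intro pos v _ k h1 h2; omega
  | succ m ih =>
    intro pos v heq k h1 h2
    by_cases hpos : a pos = true
    · by_cases hpos' : a' pos = true
      · simp only [enc, hpos, hpos', if_true] at heq
        obtain ⟨hhead, htail⟩ := List.cons.injEq _ _ _ _ ▸ heq
        have hF : F pos = F' pos := by
          have := Option.some.inj hhead; linarith [this]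
        rcases Nat.eq_or_lt_of_le h1 with rfl | hk
        · exact ⟨by rw [hpos, hpos'], fun _ => hF⟩
        · exact ih (pos+1) (F pos) (by rw [htail, hF]) k hk (by omega)
      · have : a' pos = false := by simpa using hpos'
        simp only [enc, hpos, this, if_true, if_false, Bool.false_eq_true] at heq
        exact absurd heq (by simp)
    · have hposf : a pos = false := by simpa using hpos
      by_cases hpos' : a' pos = true
      · simp only [enc, hposf, hpos', if_true, if_false, Bool.false_eq_true] at heq
        exact absurd heq (by simp)
      · have hposf' : a' pos = false := by simpa using hpos'
        simp only [enc, hposf, hposf', if_false, Bool.false_eq_true] at heq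
        have htail := (List.cons.injEq _ _ _ _ ▸ heq).2
        rcases Nat.eq_or_lt_of_le h1 with rfl | hk
        · exact ⟨by rw [hposf, hposf'], fun h => by rw [h] at hposf; exact absurd hposf (by simp)⟩
        · exact ih (pos+1) v htail k hk (by omega)



def aOf (n : ℕ) (A : Finset (Fin (n+1))) : ℕ → Bool :=
  fun i => if h : i < n+1 then decide ((⟨i, h⟩ : Fin (n+1)) ∈ A) else false

def FOf (n : ℕ) (f : Fin (n+1) → ℤ) : ℕ → ℤ :=
  fun i => if h : i < n+1 then f ⟨i, h⟩ else 0

lemma aOf_iff (n : ℕ) (A : Finset (Fin (n+1))) (i : ℕ) (h : i < n+1) :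
    aOf n A i = true ↔ (⟨i, h⟩ : Fin (n+1)) ∈ A := by
  simp [aOf, h]

lemma FOf_eq (n : ℕ) (f : Fin (n+1) → ℤ) (i : ℕ) (h : i < n+1) :
    FOf n f i = f ⟨i, h⟩ := by simp [FOf, h]

section Key

variable {n : ℕ} {A : Finset (Fin (n+1))} {f fbar : Fin (n+1) → ℤ}
  (hbe : IsBucketExtension (SimpleGraph.pathGraph (n+1)) ↑A f fbar)

lemma adj_succ (i : ℕ) (hi : i < n) :
    (SimpleGraph.pathGraph (n+1)).Adj ⟨i, by omega⟩ ⟨i+1, by omega⟩ :=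
  SimpleGraph.pathGraph_adj.2 (Or.inl rfl)

include hbe

lemma step_bound (i : ℕ) (hi : i < n) :
    |FOf n fbar (i+1) - FOf n fbar i| ≤ 1 := by
  rw [FOf_eq n fbar (i+1) (by omega), FOf_eq n fbar i (by omega)]
  rw [abs_sub_comm]
  exact hbe.2.1 _ _ (adj_succ i hi)

lemma telescope_bound (u : ℕ) : ∀ m : ℕ, u + m ≤ n →
    |FOf n fbar (u+m) - FOf n fbar u| ≤ (m : ℤ) := by
  intro m
  induction m with
  | zero => intro _; simp
  | succ m ih =>
    intro hle
    have h1 := ih (by omega)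
    have h2 := step_bound hbe (u+m) (by omega)
    calc |FOf n fbar (u+(m+1)) - FOf n fbar u|
        ≤ |FOf n fbar (u+m+1) - FOf n fbar (u+m)| + |FOf n fbar (u+m) - FOf n fbar u| := by
          rw [show u+(m+1) = u+m+1 by omega]
          exact abs_sub_le _ _ _
      _ ≤ 1 + (m : ℤ) := add_le_add h2 h1
      _ = ((m+1 : ℕ) : ℤ) := by push_cast; ring

lemma boundary_down (i : ℕ) (hi : i < n)
    (h1 : aOf n A i = true) (h2 : aOf n A (i+1) = false) :
    FOf n fbar (i+1) ≤ FOf n fbar i := by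
  rw [FOf_eq n fbar (i+1) (by omega), FOf_eq n fbar i (by omega)]
  refine hbe.2.2 _ _ (adj_succ i hi) ?_ ?_
  · exact (aOf_iff n A i (by omega)).1 h1
  · intro hmem
    rw [(aOf_iff n A (i+1) (by omega)).2 hmem] at h2
    exact absurd h2 (by simp)

lemma boundary_up (i : ℕ) (hi : i < n)
    (h1 : aOf n A (i+1) = true) (h2 : aOf n A i = false) :
    FOf n fbar i ≤ FOf n fbar (i+1) := by
  rw [FOf_eq n fbar (i+1) (by omega), FOf_eq n fbar i (by omega)]
  refine hbe.2.2 _ _ ((SimpleGraph.pathGraph (n+1)).adj_symm (adj_succ i hi)) ?_ ?_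
  · exact (aOf_iff n A (i+1) (by omega)).1 h1
  · intro hmem
    rw [(aOf_iff n A i (by omega)).2 hmem] at h2
    exact absurd h2 (by simp)

lemma agree (i : ℕ) (h : i < n+1) (ha : aOf n A i = true) :
    FOf n f i = FOf n fbar i := by
  rw [FOf_eq n f i h, FOf_eq n fbar i h]
  exact (hbe.1 _ ((aOf_iff n A i h).1 ha)).symm

lemma key : ∀ i anc : ℕ, 1 ≤ i → i ≤ n → aOf n A i = true → aOf n A anc = true → anc < i →
    (∀ k, anc < k → k < i → aOf n A k = false) →
    |FOf n f i - FOf n f anc| ≤ ((max 1 (i - anc - 1) : ℕ) : ℤ) := by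
  intro i anc h1 h2 hai haanc hlt hbet
  rw [agree hbe i (by omega) hai, agree hbe anc (by omega) haanc]
  set Fb := FOf n fbar with hFb
  rcases Nat.lt_or_ge (i - anc) 2 with hd | hd
  · -- d = 1
    have : i = anc + 1 := by omega
    subst this
    have := step_bound hbe anc (by omega)
    have hmax : ((max 1 (anc + 1 - anc - 1) : ℕ) : ℤ) = 1 := by
      norm_num
    rw [hmax]
    exact this
  · -- d ≥ 2
    have hmax : ((max 1 (i - anc - 1) : ℕ) : ℤ) = (i : ℤ) - anc - 1 := by
      have : max 1 (i - anc - 1) = i - anc - 1 := by omega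
      rw [this]; omega
    rw [hmax, abs_le]
    constructor
    · -- -(d-1) ≤ Fb i - Fb anc, i.e. Fb anc - Fb i ≤ d - 1
      have htel : |Fb (anc + (i - 1 - anc)) - Fb anc| ≤ ((i - 1 - anc : ℕ) : ℤ) :=
        telescope_bound hbe anc (i - 1 - anc) (by omega)
      rw [show anc + (i - 1 - anc) = i - 1 by omega] at htel
      have hbd : Fb (i - 1) ≤ Fb (i - 1 + 1) :=
        boundary_up hbe (i-1) (by omega)
          (by rw [show i - 1 + 1 = i by omega]; exact hai)
          (hbet (i-1) (by omega) (by omega))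
      rw [show i - 1 + 1 = i by omega] at hbd
      have habs := abs_le.1 htel
      have hcast : ((i - 1 - anc : ℕ) : ℤ) = (i : ℤ) - anc - 1 := by omega
      rw [hcast] at habs
      linarith [habs.2]
    · -- Fb i - Fb anc ≤ d - 1
      have htel : |Fb (anc + 1 + (i - anc - 1)) - Fb (anc+1)| ≤ ((i - anc - 1 : ℕ) : ℤ) :=
        telescope_bound hbe (anc+1) (i - anc - 1) (by omega)
      rw [show anc + 1 + (i - anc - 1) = i by omega] at htel
      have hbd : Fb (anc+1) ≤ Fb anc :=
        boundary_down hbe anc (by omega) haanc (hbet (anc+1) (by omega) (by omega))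
      have habs := abs_le.1 htel
      have hcast : ((i - anc - 1 : ℕ) : ℤ) = (i : ℤ) - anc - 1 := by omega
      linarith [habs.2, hcast ▸ habs.2]

end Key


end PBFaux

/-- on the path with vertices `v_0, …, v_n` (`n ≥ 1`), the number of partial
bucket functions `(A, f)` with `v_0 ∈ A` and `f(v_0) = j` is at most `4.26 · 4.383^{n-1}`. -/
theorem path_pbf_count (n : ℕ) (hn : 1 ≤ n) (j : ℤ) :
    (pathPBFs n j).Finite ∧
    ((pathPBFs n j).ncard : ℝ) ≤ 4.26 * 4.383 ^ (n - 1) := by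
  classical
  obtain ⟨m, rfl⟩ : ∃ m, n = m + 1 := ⟨n - 1, by omega⟩
  set n' := m + 1 with hn'
  let Φ : Finset (Fin (n'+1)) × (Fin (n'+1) → ℤ) → List (Option ℤ) :=
    fun p => PBFaux.enc (PBFaux.aOf n' p.1) (PBFaux.FOf n' p.2) 1 j n'
  have hmaps : ∀ p ∈ pathPBFs n' j, Φ p ∈ PBFaux.Codes n' 0 := by
    intro p hp
    obtain ⟨hvanish, h0, hj, fbar, hbe⟩ := hp
    have ha0 : PBFaux.aOf n' p.1 0 = true :=
      (PBFaux.aOf_iff n' p.1 0 (by omega)).2 (by convert h0; simp)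
    have hF0 : PBFaux.FOf n' p.2 0 = j := by
      rw [PBFaux.FOf_eq n' p.2 0 (by omega)]
      convert hj; simp
    have hmem := PBFaux.enc_mem n' (PBFaux.aOf n' p.1) (PBFaux.FOf n' p.2)
      (PBFaux.key hbe) n' 1 0 (by omega) (by omega) ha0 (by intro k h1 h2; omega)
    rw [hF0] at hmem
    simpa using hmem
  have hinj : Set.InjOn Φ (pathPBFs n' j) := by
    intro p hp q hq heq
    have hall := PBFaux.enc_inj (PBFaux.aOf n' p.1) (PBFaux.aOf n' q.1)
      (PBFaux.FOf n' p.2) (PBFaux.FOf n' q.2) n' 1 j heq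
    have haeq : ∀ k : ℕ, 1 ≤ k → k ≤ n' → PBFaux.aOf n' p.1 k = PBFaux.aOf n' q.1 k :=
      fun k h1 h2 => (hall k h1 (by omega)).1
    have hFeq : ∀ k : ℕ, 1 ≤ k → k ≤ n' → PBFaux.aOf n' p.1 k = true →
        PBFaux.FOf n' p.2 k = PBFaux.FOf n' q.2 k :=
      fun k h1 h2 h3 => (hall k h1 (by omega)).2 h3
    have hA : p.1 = q.1 := by
      ext i
      rcases Nat.eq_zero_or_pos i.val with h0 | h0
      · have hi0 : i = 0 := Fin.ext h0
        subst hi0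
        simp only [hp.2.1, hq.2.1]
      · have hi : i.val < n' + 1 := i.isLt
        have h1 := haeq i.val h0 (by omega)
        rw [PBFaux.aOf, PBFaux.aOf] at h1
        simp only [hi, dif_pos] at h1
        rw [Fin.eta] at h1
        constructor
        · intro hmem
          have := (decide_eq_true_iff).2 hmem
          rw [this] at h1
          exact (decide_eq_true_iff).1 h1.symm
        · intro hmem
          have := (decide_eq_true_iff).2 hmem
          rw [this] at h1
          exact (decide_eq_true_iff).1 h1
    have hf : p.2 = q.2 := by
      funext i
      rcases Nat.eq_zero_or_pos i.val with h0 | h0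
      · have hi0 : i = 0 := Fin.ext h0
        subst hi0
        rw [hp.2.2.1, hq.2.2.1]
      · have hi : i.val < n' + 1 := i.isLt
        by_cases hmem : i ∈ p.1
        · have hat : PBFaux.aOf n' p.1 i.val = true := by
            rw [PBFaux.aOf_iff n' p.1 i.val hi, Fin.eta]
            exact hmem
          have := hFeq i.val h0 (by omega) hat
          rw [PBFaux.FOf_eq n' p.2 i.val hi, PBFaux.FOf_eq n' q.2 i.val hi, Fin.eta] at this
          exact this
        · have hmem' : i ∉ q.1 := by rw [← hA]; exact hmem
          rw [hp.1 i hmem, hq.1 i hmem']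
    exact Prod.ext hA hf
  have himage : Φ '' (pathPBFs n' j) ⊆ ↑(PBFaux.Codes n' 0) := by
    rintro _ ⟨p, hp, rfl⟩
    exact hmaps p hp
  have hfinim : (Φ '' (pathPBFs n' j)).Finite :=
    Set.Finite.subset (PBFaux.Codes n' 0).finite_toSet himage
  have hfin : (pathPBFs n' j).Finite := Set.Finite.of_finite_image hfinim hinj
  refine ⟨hfin, ?_⟩
  have hcard : (pathPBFs n' j).ncard ≤ (PBFaux.Codes n' 0).card := by
    rw [← Set.ncard_image_of_injOn hinj]
    calc (Φ '' (pathPBFs n' j)).ncard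
        ≤ (↑(PBFaux.Codes n' 0) : Set (List (Option ℤ))).ncard :=
          Set.ncard_le_ncard himage (PBFaux.Codes n' 0).finite_toSet
      _ = (PBFaux.Codes n' 0).card := Set.ncard_coe_finset _
  have hbound := PBFaux.codes_card_bound n' (by omega) 0
  have hphi0 : PBFaux.phi 0 = 4.26 / 4.383 := by rw [PBFaux.phi]
  calc ((pathPBFs n' j).ncard : ℝ)
      ≤ ((PBFaux.Codes n' 0).card : ℝ) := by exact_mod_cast hcard
    _ ≤ PBFaux.phi 0 * 4.383 ^ n' := hbound
    _ = 4.26 * 4.383 ^ (n' - 1) := by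
        rw [hphi0, hn']
        rw [show m + 1 - 1 = m from rfl, pow_succ]
        field_simp
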